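/- Let M be an m×n matrix with entries in the three-element set {1, 0', 0*}. Suppose M avoids (as submatrices with strictly increasing row and column indices) the patterns [[0*,1],[1,0*]], [[1,0*],[0*,1]], [[1,*],[0',1]], and [[0*,*],[0',0*]], and suppose every 0* entry has a 1 strictly to its right in its row and a 1 strictly above it in its column. Then there exists a permutation of the columns of M such that in the permuted matrix, no row contains a 1 strictly to the left of a 0* (i.e., the permuted matrix avoids the 1×2 pattern (1 0*)). -/

import Mathlib

/-- The three possible entries of the relabeled matrix: 1, 0' (plain zero), 0* (starred zero). -/
inductive Entry where
  | one : Entry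
  | zeroP : Entry  -- 0'
  | zeroS : Entry  -- 0*
deriving DecidableEq

open Entry

/-- `c` must be placed before `d`: some row has a starred zero in column `c` and a one in
column `d`. -/
def EntRel {m n : ℕ} (M : Fin m → Fin n → Entry) (c d : Fin n) : Prop :=
  ∃ i, M i c = zeroS ∧ M i d = one

/-- The relation `EntRel M` has no cycles. -/
theorem entRel_noCyc {m n : ℕ} (M : Fin m → Fin n → Entry)
    (h1 : ¬ ∃ (i1 i2 : Fin m) (j1 j2 : Fin n), i1 < i2 ∧ j1 < j2 ∧
      M i1 j1 = zeroS ∧ M i1 j2 = one ∧ M i2 j1 = one ∧ M i2 j2 = zeroS)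
    (h2 : ¬ ∃ (i1 i2 : Fin m) (j1 j2 : Fin n), i1 < i2 ∧ j1 < j2 ∧
      M i1 j1 = one ∧ M i1 j2 = zeroS ∧ M i2 j1 = zeroS ∧ M i2 j2 = one)
    (h3 : ¬ ∃ (i1 i2 : Fin m) (j1 j2 : Fin n), i1 < i2 ∧ j1 < j2 ∧
      M i1 j1 = one ∧ M i2 j1 = zeroP ∧ M i2 j2 = one)
    (h4 : ¬ ∃ (i1 i2 : Fin m) (j1 j2 : Fin n), i1 < i2 ∧ j1 < j2 ∧
      M i1 j1 = zeroS ∧ M i2 j1 = zeroP ∧ M i2 j2 = zeroS) :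
    ∀ k, 0 < k → ∀ (c : ZMod k → Fin n) (i : ZMod k → Fin m),
      ¬ (∀ t, M (i t) (c t) = zeroS ∧ M (i t) (c (t + 1)) = one) := by
  classical
  intro k
  induction k using Nat.strong_induction_on with
  | _ k IH =>
  intro hk c i hcyc
  haveI : NeZero k := ⟨hk.ne'⟩
  -- a shortcut through the cycle produces a shorter cycle, contradiction
  have shortcut : ∀ (p : ZMod k) (e : ℕ) (r : Fin m), e + 1 < k →
      M r (c (p + (e : ZMod k))) = zeroS → M r (c p) = one → False := by
    intro p e r he h0 h1'
    refine IH (e + 1) he (Nat.succ_pos e)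
      (fun u => c (p + ((u.val : ℕ) : ZMod k)))
      (fun u => if u.val = e then r else i (p + ((u.val : ℕ) : ZMod k))) (fun u => ?_)
    have hval : u.val < e + 1 := ZMod.val_lt u
    have hadd : (u + 1).val = (u.val + 1 % (e + 1)) % (e + 1) := by
      rw [ZMod.val_add, ZMod.val_one_eq_one_mod]
    by_cases hu : u.val = e
    · have h10 : (u + 1).val = 0 := by
        rw [hadd, hu]
        rcases Nat.eq_zero_or_pos e with he0 | hep
        · subst he0; simp
        · rw [Nat.mod_eq_of_lt (by omega : 1 < e + 1)]
          simp [Nat.mod_self]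
      constructor
      · simp only [if_pos hu, hu]
        exact h0
      · simp only [if_pos hu, h10, Nat.cast_zero, add_zero]
        exact h1'
    · have hue : u.val < e := by omega
      have h10 : (u + 1).val = u.val + 1 := by
        rw [hadd, Nat.mod_eq_of_lt (by omega : 1 < e + 1),
          Nat.mod_eq_of_lt (by omega : u.val + 1 < e + 1)]
      constructor
      · simp only [if_neg hu]
        exact (hcyc (p + ((u.val : ℕ) : ZMod k))).1
      · simp only [if_neg hu, h10]
        have harr : p + ((u.val + 1 : ℕ) : ZMod k) = (p + ((u.val : ℕ) : ZMod k)) + 1 := by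
          push_cast
          ring
        rw [harr]
        exact (hcyc (p + ((u.val : ℕ) : ZMod k))).2
  -- entries off the cycle pattern are plain zeros
  have hvlt : ∀ x : ZMod k, x ≠ 0 → x ≠ -1 → x.val + 1 < k := by
    intro x hx0 hx1
    have hlt : x.val < k := ZMod.val_lt x
    rcases lt_or_eq_of_le (Nat.succ_le_of_lt hlt) with h | h
    · exact h
    · exfalso
      apply hx1
      have hx : ((x.val : ℕ) : ZMod k) = x := ZMod.natCast_rightInverse x
      have hk1 : ((x.val : ℕ) : ZMod k) = -1 := by
        have hks : ((k : ℕ) : ZMod k) = 0 := ZMod.natCast_self k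
        have : (x.val : ℕ) + 1 = k := h
        have h2' : ((x.val : ℕ) : ZMod k) + 1 = 0 := by
          rw [show ((x.val : ℕ) : ZMod k) + 1 = (((x.val + 1 : ℕ)) : ZMod k) by push_cast; ring,
            this, hks]
        linear_combination h2'
      rw [← hx, hk1]
  have chord : ∀ t s : ZMod k, s ≠ t → s ≠ t + 1 → M (i t) (c s) = zeroP := by
    intro t s hst hst1
    cases hM : M (i t) (c s) with
    | zeroP => rfl
    | one =>
      exfalso
      have hx0 : t - s ≠ 0 := sub_ne_zero.mpr (Ne.symm hst)
      have hx1 : t - s ≠ -1 := by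
        intro h
        apply hst1
        have : s = t + 1 := by linear_combination -h
        exact this
      have hts : s + (((t - s).val : ℕ) : ZMod k) = t := by
        rw [ZMod.natCast_rightInverse (t - s)]; ring
      refine shortcut s ((t - s).val) (i t) (hvlt _ hx0 hx1) ?_ ?_
      · rw [hts]; exact (hcyc t).1
      · exact hM
    | zeroS =>
      exfalso
      have hx0 : s - (t + 1) ≠ 0 := sub_ne_zero.mpr hst1
      have hx1 : s - (t + 1) ≠ -1 := by
        intro h
        apply hst
        have : s = t := by linear_combination h
        exact this
      have hts : (t + 1) + (((s - (t + 1)).val : ℕ) : ZMod k) = s := by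
        rw [ZMod.natCast_rightInverse (s - (t + 1))]; ring
      refine shortcut (t + 1) ((s - (t + 1)).val) (i t) (hvlt _ hx0 hx1) ?_ ?_
      · rw [hts]; exact hM
      · exact (hcyc t).2
  by_cases hk1 : k = 1
  · subst hk1
    obtain ⟨ha, hb⟩ := hcyc 0
    rw [show ((0 : ZMod 1) + 1) = 0 by decide, ha] at hb
    exact absurd hb (by decide)
  by_cases hk2 : k = 2
  · subst hk2
    obtain ⟨a1, b1⟩ := hcyc 0
    obtain ⟨a2, b2⟩ := hcyc 1
    rw [show ((0 : ZMod 2) + 1) = 1 by decide] at b1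
    rw [show ((1 : ZMod 2) + 1) = 0 by decide] at b2
    have hr : i 0 ≠ i 1 := by
      intro h
      rw [h] at a1
      rw [a1] at b2
      exact absurd b2 (by decide)
    have hc : c 0 ≠ c 1 := by
      intro h
      rw [← h, a1] at b1
      exact absurd b1 (by decide)
    rcases lt_trichotomy (i 0) (i 1) with hi | hi | hi
    · rcases lt_trichotomy (c 0) (c 1) with hcc | hcc | hcc
      · exact h1 ⟨i 0, i 1, c 0, c 1, hi, hcc, a1, b1, b2, a2⟩
      · exact hc hcc
      · exact h2 ⟨i 0, i 1, c 1, c 0, hi, hcc, b1, a1, a2, b2⟩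
    · exact hr hi
    · rcases lt_trichotomy (c 0) (c 1) with hcc | hcc | hcc
      · exact h2 ⟨i 1, i 0, c 0, c 1, hi, hcc, b2, a2, a1, b1⟩
      · exact hc hcc
      · exact h1 ⟨i 1, i 0, c 1, c 0, hi, hcc, a2, b2, b1, a1⟩
  -- now k ≥ 3
  have hk3 : 3 ≤ k := by omega
  have hone_ne : (1 : ZMod k) ≠ 0 := by
    intro h
    have hv : (1 : ZMod k).val = 1 := by
      rw [ZMod.val_one_eq_one_mod]
      exact Nat.mod_eq_of_lt (by omega)
    rw [h, ZMod.val_zero] at hv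
    exact absurd hv (by omega)
  have htwo_ne : (2 : ZMod k) ≠ 0 := by
    intro h
    have hv : (2 : ZMod k).val = 2 := by
      rw [show (2 : ZMod k) = ((2 : ℕ) : ZMod k) by push_cast; ring]
      exact ZMod.val_cast_of_lt (by omega)
    rw [h, ZMod.val_zero] at hv
    exact absurd hv (by omega)
  haveI : Nonempty (ZMod k) := ⟨0⟩
  obtain ⟨s, hs⟩ := Finite.exists_min i
  have hstrict : ∀ t, t ≠ s → i s < i t := by
    intro t ht
    rcases lt_or_eq_of_le (hs t) with h | h
    · exact h
    · exfalso
      by_cases hts : s = t + 1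
      · have hb := (hcyc t).2
        rw [← hts, ← h, (hcyc s).1] at hb
        exact absurd hb (by decide)
      · have hp := chord t s (Ne.symm ht) hts
        rw [← h, (hcyc s).1] at hp
        exact absurd hp (by decide)
  have haddne : s + 1 ≠ s := by
    intro h
    exact hone_ne (by linear_combination h)
  have hsubne : s - 1 ≠ s := by
    intro h
    exact hone_ne (by linear_combination -h)
  have chordA : M (i (s + 1)) (c s) = zeroP := by
    refine chord (s + 1) s (Ne.symm haddne) ?_
    intro h
    exact htwo_ne (by linear_combination -h)
  have chordB : M (i (s - 1)) (c (s + 1)) = zeroP := by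
    refine chord (s - 1) (s + 1) ?_ ?_
    · intro h
      exact htwo_ne (by linear_combination h)
    · intro h
      exact hone_ne (by linear_combination h)
  have rowA : i s < i (s + 1) := hstrict (s + 1) haddne
  have rowB : i s < i (s - 1) := hstrict (s - 1) hsubne
  rcases lt_trichotomy (c s) (c (s + 1)) with hcc | hcc | hcc
  · exact h4 ⟨i s, i (s + 1), c s, c (s + 1), rowA, hcc, (hcyc s).1, chordA, (hcyc (s + 1)).1⟩
  · have ha := (hcyc s).1
    have hb := (hcyc s).2
    rw [← hcc, ha] at hb
    exact absurd hb (by decide)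
  · refine h3 ⟨i s, i (s - 1), c (s + 1), c s, rowB, hcc, (hcyc s).2, chordB, ?_⟩
    have hb := (hcyc (s - 1)).2
    rwa [sub_add_cancel] at hb

open Entry in
theorem stmt_11 (m n : ℕ) (M : Fin m → Fin n → Entry)
    -- avoids [[0*,1],[1,0*]]
    (h1 : ¬ ∃ (i1 i2 : Fin m) (j1 j2 : Fin n), i1 < i2 ∧ j1 < j2 ∧
      M i1 j1 = zeroS ∧ M i1 j2 = one ∧ M i2 j1 = one ∧ M i2 j2 = zeroS)
    -- avoids [[1,0*],[0*,1]]
    (h2 : ¬ ∃ (i1 i2 : Fin m) (j1 j2 : Fin n), i1 < i2 ∧ j1 < j2 ∧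
      M i1 j1 = one ∧ M i1 j2 = zeroS ∧ M i2 j1 = zeroS ∧ M i2 j2 = one)
    -- avoids [[1,*],[0',1]]
    (h3 : ¬ ∃ (i1 i2 : Fin m) (j1 j2 : Fin n), i1 < i2 ∧ j1 < j2 ∧
      M i1 j1 = one ∧ M i2 j1 = zeroP ∧ M i2 j2 = one)
    -- avoids [[0*,*],[0',0*]]
    (h4 : ¬ ∃ (i1 i2 : Fin m) (j1 j2 : Fin n), i1 < i2 ∧ j1 < j2 ∧
      M i1 j1 = zeroS ∧ M i2 j1 = zeroP ∧ M i2 j2 = zeroS)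
    -- every 0* has a 1 to its right and a 1 above it
    (hwit : ∀ i j, M i j = zeroS →
      (∃ j' : Fin n, j < j' ∧ M i j' = one) ∧ (∃ i' : Fin m, i' < i ∧ M i' j = one)) :
    ∃ σ : Equiv.Perm (Fin n),
      ¬ ∃ (i : Fin m) (j j' : Fin n), j < j' ∧ M i (σ j) = one ∧ M i (σ j') = zeroS := by
  classical
  -- paths in the relation
  have path : ∀ a b, Relation.TransGen (EntRel M) a b → ∃ (k : ℕ) (f : ℕ → Fin n),
      0 < k ∧ f 0 = a ∧ f k = b ∧ ∀ j < k, EntRel M (f j) (f (j + 1)) := by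
    intro a b htg
    induction htg with
    | @single b' hrel =>
      refine ⟨1, fun j => if j = 0 then a else b', Nat.one_pos, by simp, by simp, ?_⟩
      intro j hj
      interval_cases j
      simpa using hrel
    | @tail b' c' hab hbc IHp =>
      obtain ⟨k, f, hkpos, hf0, hfk, hstep⟩ := IHp
      refine ⟨k + 1, fun j => if j = k + 1 then c' else f j, by omega, ?_, by simp, ?_⟩
      · simp only [if_neg (by omega : ¬(0 = k + 1))]
        exact hf0
      · intro j hj
        by_cases hjk : j = k
        · subst hjk
          simp only [if_neg (show ¬ j = j + 1 by omega), if_pos rfl]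
          rw [hfk]
          exact hbc
        · have hjlt : j < k := by omega
          simp only [if_neg (by omega : ¬(j = k + 1)), if_neg (by omega : ¬(j + 1 = k + 1))]
          exact hstep j hjlt
  -- acyclicity
  have acyclic : ∀ a, ¬ Relation.TransGen (EntRel M) a a := by
    intro a hta
    obtain ⟨k, f, hkpos, hf0, hfk, hstep⟩ := path a a hta
    haveI : NeZero k := ⟨hkpos.ne'⟩
    have hedge : ∀ t : ZMod k, EntRel M (f t.val) (f ((t + 1).val)) := by
      intro t
      have hlt : t.val < k := ZMod.val_lt t
      by_cases h : t.val + 1 = k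
      · have h0 : (t + 1).val = 0 := by
          rw [ZMod.val_add, ZMod.val_one_eq_one_mod]
          rcases Nat.eq_or_lt_of_le hkpos with h1 | h1
          · have e1 : 1 % k = 0 := by rw [← h1]
            have e2 : t.val = 0 := by omega
            rw [e2, e1]
            exact Nat.zero_mod k
          · rw [Nat.mod_eq_of_lt h1, h, Nat.mod_self]
        rw [h0, hf0]
        have hh := hstep t.val hlt
        rwa [h, hfk] at hh
      · have hk2 : 2 ≤ k := by omega
        have h0 : (t + 1).val = t.val + 1 := by
          rw [ZMod.val_add, ZMod.val_one_eq_one_mod,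
            Nat.mod_eq_of_lt (show 1 < k by omega),
            Nat.mod_eq_of_lt (show t.val + 1 < k by omega)]
        rw [h0]
        exact hstep t.val hlt
    choose I hI using hedge
    exact entRel_noCyc M h1 h2 h3 h4 k hkpos (fun t => f t.val) I hI
  -- extend to a linear order
  let rP : Fin n → Fin n → Prop := fun a b => a = b ∨ Relation.TransGen (EntRel M) a b
  haveI : IsRefl (Fin n) rP := ⟨fun a => Or.inl rfl⟩
  haveI : IsTrans (Fin n) rP := by
    constructor
    rintro a b c (rfl | hab) hbc
    · exact hbc
    · rcases hbc with rfl | hbc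
      · exact Or.inr hab
      · exact Or.inr (hab.trans hbc)
  haveI : IsAntisymm (Fin n) rP := by
    constructor
    rintro a b (rfl | hab) hba
    · rfl
    · rcases hba with rfl | hba
      · rfl
      · exact absurd (hab.trans hba) (acyclic a)
  haveI : IsPreorder (Fin n) rP := ⟨⟩
  haveI : IsPartialOrder (Fin n) rP := ⟨⟩
  obtain ⟨sOrd, hlin, hsub⟩ := extend_partialOrder rP
  haveI := hlin
  haveI : DecidableRel sOrd := fun a b => Classical.dec _
  set l := Finset.univ.sort sOrd with hl
  have hlen : l.length = n := by
    rw [hl, Finset.length_sort, Finset.card_univ, Fintype.card_fin]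
  have hnd : l.Nodup := Finset.sort_nodup _ sOrd
  have hsort : l.Pairwise sOrd := Finset.pairwise_sort _ sOrd
  set g : Fin n → Fin n := fun j => l.get (Fin.cast hlen.symm j) with hg
  have hginj : Function.Injective g := by
    intro a b hab
    have := (List.Nodup.get_inj_iff hnd).mp hab
    have hval : (Fin.cast hlen.symm a).val = (Fin.cast hlen.symm b).val := by rw [this]
    exact Fin.ext hval
  refine ⟨Equiv.ofBijective g (Finite.injective_iff_bijective.mp hginj), ?_⟩
  rintro ⟨i0, j, j', hjj', hone, hzs⟩
  simp only [Equiv.ofBijective_apply] at hone hzs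
  have hRj : EntRel M (g j') (g j) := ⟨i0, hzs, hone⟩
  have hs1 : sOrd (g j') (g j) := hsub _ _ (Or.inr (Relation.TransGen.single hRj))
  have hs2 : sOrd (g j) (g j') := by
    have hlt : Fin.cast hlen.symm j < Fin.cast hlen.symm j' := by
      simp only [Fin.lt_def, Fin.coe_cast]
      exact hjj'
    exact hsort.rel_get_of_lt hlt
  have hgeq : g j = g j' := antisymm hs2 hs1
  have : j = j' := hginj hgeq
  omega
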